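/- Let μ₁ and μ₂ be Borel probability measures on ℝ, and let U : L²(μ₁) → L²(μ₂) be a linear isometric bijection such that U(g·f) = g·U(f) for every f ∈ L²(μ₁) and every bounded Borel measurable function g : ℝ → ℂ. Then μ₁ and μ₂ are mutually absolutely continuous, and, setting h := U(1) ∈ L²(μ₂), one has U(f) = h·f (μ₂-almost everywhere) for every f ∈ L²(μ₁), and |h|² equals the Radon–Nikodym derivative dμ₁/dμ₂ μ₂-almost everywhere. -/

import Mathlib

open MeasureTheory

open Filter
open scoped ENNReal NNReal Topology

lemma eq_rpow_half {a b : ℝ≥0∞} (h : a ^ 2 = b) : a = b ^ (1/2 : ℝ) := by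
  subst h
  rw [← ENNReal.rpow_natCast a 2, ← ENNReal.rpow_mul]
  norm_num

/-- The class of the constant function `1` in `L²(μ)`. -/
noncomputable def lpOne (μ : Measure ℝ) [IsFiniteMeasure μ] : Lp ℂ 2 μ :=
  MemLp.toLp (fun _ : ℝ => (1 : ℂ)) (memLp_const (1 : ℂ))

/-- Measure-theoretic core of the first part of Theorem 8.2 of the paper: a unitary
`U : L²(μ₁) → L²(μ₂)` commuting with multiplication by all bounded Borel functions forces
the measures to be mutually absolutely continuous, `U` to be multiplication by
`h := U(1)`, and `|h|²` to be the Radon–Nikodym derivative `dμ₁/dμ₂`. -/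
theorem stmt9 (μ₁ μ₂ : Measure ℝ) [IsProbabilityMeasure μ₁] [IsProbabilityMeasure μ₂]
    (U : Lp ℂ 2 μ₁ ≃ₗᵢ[ℂ] Lp ℂ 2 μ₂)
    (hU : ∀ g : ℝ → ℂ, Measurable g → (∃ C : ℝ, ∀ x : ℝ, ‖g x‖ ≤ C) →
      ∀ f gf : Lp ℂ 2 μ₁, ((gf : ℝ → ℂ) =ᵐ[μ₁] fun x : ℝ => g x * f x) →
        ((U gf : ℝ → ℂ) =ᵐ[μ₂] fun x : ℝ => g x * (U f : ℝ → ℂ) x)) :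
    μ₁ ≪ μ₂ ∧ μ₂ ≪ μ₁ ∧
    (∀ f : Lp ℂ 2 μ₁,
      (U f : ℝ → ℂ) =ᵐ[μ₂] fun x : ℝ => (U (lpOne μ₁) : ℝ → ℂ) x * (f : ℝ → ℂ) x) ∧
    (fun x : ℝ => ‖(U (lpOne μ₁) : ℝ → ℂ) x‖ ^ 2)
      =ᵐ[μ₂] fun x : ℝ => (μ₁.rnDeriv μ₂ x).toReal := by
  have sq_eLpNorm : ∀ {α : Type} [MeasurableSpace α] (μ : Measure α) (f : α → ℂ),
      eLpNorm f 2 μ ^ 2 = ∫⁻ x, (‖f x‖₊ : ℝ≥0∞) ^ 2 ∂μ := by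
    intro α _ μ f
    rw [eLpNorm_eq_lintegral_rpow_enorm_toReal two_ne_zero ENNReal.ofNat_ne_top,
      ← ENNReal.rpow_natCast _ 2, ← ENNReal.rpow_mul]
    norm_num
    rfl
  -- notation
  set h : Lp ℂ 2 μ₂ := U (lpOne μ₁) with hh_def
  have hmeas : AEStronglyMeasurable (h : ℝ → ℂ) μ₂ := Lp.aestronglyMeasurable h
  set H : ℝ → ℂ := hmeas.mk _ with hH_def
  have hHm : Measurable H := hmeas.stronglyMeasurable_mk.measurable
  have hhH : (h : ℝ → ℂ) =ᵐ[μ₂] H := hmeas.ae_eq_mk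
  set D : ℝ → ℝ≥0∞ := fun x => (‖H x‖₊ : ℝ≥0∞) ^ 2 with hD_def
  have hDm : Measurable D :=
    (measurable_coe_nnreal_ennreal.comp hHm.nnnorm).pow_const 2
  -- norm preservation as eLpNorm
  have normEq : ∀ v : Lp ℂ 2 μ₁, eLpNorm (⇑(U v)) 2 μ₂ = eLpNorm (⇑v) 2 μ₁ := by
    intro v
    have h1 : ‖U v‖ = ‖v‖ := U.norm_map v
    rw [Lp.norm_def, Lp.norm_def] at h1
    exact (ENNReal.toReal_eq_toReal_iff' (Lp.eLpNorm_ne_top _) (Lp.eLpNorm_ne_top _)).1 h1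
  have hOne : (lpOne μ₁ : ℝ → ℂ) =ᵐ[μ₁] fun _ => (1 : ℂ) := MemLp.coeFn_toLp _
  -- Step A
  have stepA : ∀ (g : ℝ → ℂ) (hg : Measurable g) (C : ℝ) (hC : ∀ x, ‖g x‖ ≤ C)
      (hg2 : MemLp g 2 μ₁),
      (⇑(U (hg2.toLp g)) : ℝ → ℂ) =ᵐ[μ₂] fun x => g x * H x := by
    intro g hg C hC hg2
    have hcond : (⇑(hg2.toLp g) : ℝ → ℂ) =ᵐ[μ₁] fun x => g x * (lpOne μ₁ : ℝ → ℂ) x := by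
      filter_upwards [hg2.coeFn_toLp, hOne] with x h1 h2
      simp [h1, h2]
    have key := hU g hg ⟨C, hC⟩ (lpOne μ₁) (hg2.toLp g) hcond
    filter_upwards [key, hhH] with x h1 h2
    rw [h1, ← hh_def, h2]
  -- Step B : μ₁ s = ∫⁻ x in s, D x ∂μ₂
  have stepB : ∀ s : Set ℝ, MeasurableSet s → μ₁ s = ∫⁻ x in s, D x ∂μ₂ := by
    intro s hs
    set g : ℝ → ℂ := s.indicator fun _ => (1 : ℂ) with hg_def
    have hgm : Measurable g := measurable_const.indicator hs
    have hgb : ∀ x, ‖g x‖ ≤ 1 := by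
      intro x
      by_cases hx : x ∈ s <;> simp [hg_def, hx]
    have hg2 : MemLp g 2 μ₁ := MemLp.of_bound hgm.aestronglyMeasurable 1 (ae_of_all _ hgb)
    have e := congrArg (· ^ 2) (normEq (hg2.toLp g))
    have lhs1 : eLpNorm (⇑(hg2.toLp g)) 2 μ₁ ^ 2 = μ₁ s := by
      rw [eLpNorm_congr_ae hg2.coeFn_toLp, sq_eLpNorm]
      have : (fun x => (‖g x‖₊ : ℝ≥0∞) ^ 2) = s.indicator fun _ => 1 := by
        funext x
        by_cases hx : x ∈ s <;> simp [hg_def, hx]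
      rw [this, lintegral_indicator hs]
      simp
    have rhs1 : eLpNorm (⇑(U (hg2.toLp g))) 2 μ₂ ^ 2 = ∫⁻ x in s, D x ∂μ₂ := by
      rw [eLpNorm_congr_ae (stepA g hgm 1 hgb hg2), sq_eLpNorm]
      have : (fun x => (‖g x * H x‖₊ : ℝ≥0∞) ^ 2) = s.indicator D := by
        funext x
        by_cases hx : x ∈ s <;> simp [hg_def, hD_def, hx, nnnorm_mul, mul_pow]
      rw [this, lintegral_indicator hs]
    rw [← lhs1, ← rhs1, e]
  have hμ₁ : μ₁ = μ₂.withDensity D := by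
    ext s hs
    rw [withDensity_apply _ hs]
    exact stepB s hs
  have hac12 : μ₁ ≪ μ₂ := by
    rw [hμ₁]; exact withDensity_absolutelyContinuous μ₂ D
  have hrn : μ₁.rnDeriv μ₂ =ᵐ[μ₂] D := by
    rw [hμ₁]; exact Measure.rnDeriv_withDensity μ₂ hDm
  -- Step D' : U f = H * f' for any measurable μ₁-representative f' of f
  have stepD' : ∀ (f : Lp ℂ 2 μ₁) (f' : ℝ → ℂ), Measurable f' → ((f : ℝ → ℂ) =ᵐ[μ₁] f') →
      (⇑(U f) : ℝ → ℂ) =ᵐ[μ₂] fun x => H x * f' x := by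
    intro f f' hf'm hf'
    set g : ℕ → ℝ → ℂ := fun n x => if ‖f' x‖ ≤ (n : ℝ) then f' x else 0 with hg_def
    have hgm : ∀ n, Measurable (g n) := fun n =>
      Measurable.ite (measurableSet_le hf'm.norm measurable_const) hf'm measurable_const
    have hgb : ∀ (n : ℕ) (x : ℝ), ‖g n x‖ ≤ (n : ℝ) := by
      intro n x
      simp only [hg_def]
      split_ifs with hx
      · exact hx
      · simp
    have hg2 : ∀ n, MemLp (g n) 2 μ₁ := fun n =>
      MemLp.of_bound (hgm n).aestronglyMeasurable _ (ae_of_all _ (hgb n))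
    set ε : ℕ → ℝ≥0∞ := fun n => ∫⁻ x, (‖g n x - f' x‖₊ : ℝ≥0∞) ^ 2 ∂μ₁ with hε_def
    have hf'int : ∫⁻ x, (‖f' x‖₊ : ℝ≥0∞) ^ 2 ∂μ₁ ≠ ⊤ := by
      have e : ∫⁻ x, (‖f' x‖₊ : ℝ≥0∞) ^ 2 ∂μ₁ = eLpNorm (⇑f) 2 μ₁ ^ 2 := by
        rw [sq_eLpNorm]
        apply lintegral_congr_ae
        filter_upwards [hf'] with x hx
        rw [hx]
      rw [e]
      exact ENNReal.pow_ne_top (Lp.eLpNorm_ne_top f)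
    have hε0 : Tendsto ε atTop (𝓝 0) := by
      have key := tendsto_lintegral_of_dominated_convergence (μ := μ₁)
        (F := fun n x => (‖g n x - f' x‖₊ : ℝ≥0∞) ^ 2) (f := fun _ => 0)
        (fun x => (‖f' x‖₊ : ℝ≥0∞) ^ 2)
        (fun n => (((hgm n).sub hf'm).nnnorm.coe_nnreal_ennreal).pow_const 2)
        ?_ hf'int ?_
      · simpa using key
      · intro n
        refine ae_of_all _ fun x => ?_
        simp only [hg_def]
        split_ifs with hx
        · simp
        · rw [zero_sub, nnnorm_neg]
      · refine ae_of_all _ fun x => ?_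
        obtain ⟨N, hN⟩ := exists_nat_ge ‖f' x‖
        refine tendsto_atTop_of_eventually_const (i₀ := N) fun n hn => ?_
        have hle : ‖f' x‖ ≤ (n : ℝ) := hN.trans (Nat.cast_le.2 hn)
        simp only [hg_def]
        rw [if_pos hle]
        simp
    have hA : ∀ n, eLpNorm (fun x => (⇑(U f) : ℝ → ℂ) x - H x * f' x) 2 μ₂
        ≤ 2 * ε n ^ (1/2 : ℝ) := by
      intro n
      set Gn : Lp ℂ 2 μ₁ := (hg2 n).toLp (g n) with hGn_def
      have t1 : eLpNorm (fun x => (⇑(U f) : ℝ → ℂ) x - (⇑(U Gn) : ℝ → ℂ) x) 2 μ₂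
          = ε n ^ (1/2 : ℝ) := by
        have c1 : (fun x => (⇑(U f) : ℝ → ℂ) x - (⇑(U Gn) : ℝ → ℂ) x)
            =ᵐ[μ₂] ⇑(U (f - Gn)) := by
          rw [map_sub]
          filter_upwards [Lp.coeFn_sub (U f) (U Gn)] with x hx
          rw [hx]
          rfl
        rw [eLpNorm_congr_ae c1, normEq]
        have c2 : (⇑(f - Gn) : ℝ → ℂ) =ᵐ[μ₁] fun x => f' x - g n x := by
          filter_upwards [Lp.coeFn_sub f Gn, hf', (hg2 n).coeFn_toLp] with x h1 h2 h3
          rw [h1, Pi.sub_apply, h2, h3]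
        rw [eLpNorm_congr_ae c2]
        apply eq_rpow_half
        rw [sq_eLpNorm, hε_def]
        simp only []
        apply lintegral_congr
        intro x
        rw [← nnnorm_neg (f' x - g n x), neg_sub]
      have t2 : eLpNorm (fun x => (⇑(U Gn) : ℝ → ℂ) x - H x * f' x) 2 μ₂
          = ε n ^ (1/2 : ℝ) := by
        have c1 : (fun x => (⇑(U Gn) : ℝ → ℂ) x - H x * f' x)
            =ᵐ[μ₂] fun x => H x * (g n x - f' x) := by
          filter_upwards [stepA (g n) (hgm n) (n : ℝ) (hgb n) (hg2 n)] with x h1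
          rw [hGn_def, h1]
          ring
        rw [eLpNorm_congr_ae c1]
        apply eq_rpow_half
        rw [sq_eLpNorm]
        have e1 : ∫⁻ x, (‖H x * (g n x - f' x)‖₊ : ℝ≥0∞) ^ 2 ∂μ₂
            = ∫⁻ x, (D * fun x => (‖g n x - f' x‖₊ : ℝ≥0∞) ^ 2) x ∂μ₂ := by
          apply lintegral_congr
          intro x
          simp [hD_def, nnnorm_mul, mul_pow, ENNReal.coe_mul]
        have e2 : ∫⁻ x, (‖g n x - f' x‖₊ : ℝ≥0∞) ^ 2 ∂μ₂.withDensity D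
            = ∫⁻ x, (D * fun x => (‖g n x - f' x‖₊ : ℝ≥0∞) ^ 2) x ∂μ₂ :=
          lintegral_withDensity_eq_lintegral_mul μ₂ hDm
          (((((hgm n).sub hf'm).nnnorm.coe_nnreal_ennreal).pow_const 2))
        rw [e1, ← e2, ← hμ₁, hε_def]
      have split : (fun x => (⇑(U f) : ℝ → ℂ) x - H x * f' x)
          = (fun x => (⇑(U f) : ℝ → ℂ) x - (⇑(U Gn) : ℝ → ℂ) x)
            + fun x => (⇑(U Gn) : ℝ → ℂ) x - H x * f' x := by
        funext x
        simp [sub_add_sub_cancel]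
      calc eLpNorm (fun x => (⇑(U f) : ℝ → ℂ) x - H x * f' x) 2 μ₂
          = eLpNorm ((fun x => (⇑(U f) : ℝ → ℂ) x - (⇑(U Gn) : ℝ → ℂ) x)
            + fun x => (⇑(U Gn) : ℝ → ℂ) x - H x * f' x) 2 μ₂ := by rw [← split]
        _ ≤ eLpNorm (fun x => (⇑(U f) : ℝ → ℂ) x - (⇑(U Gn) : ℝ → ℂ) x) 2 μ₂
            + eLpNorm (fun x => (⇑(U Gn) : ℝ → ℂ) x - H x * f' x) 2 μ₂ :=
          eLpNorm_add_le ((Lp.aestronglyMeasurable (U f)).sub (Lp.aestronglyMeasurable (U Gn)))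
            ((Lp.aestronglyMeasurable (U Gn)).sub (hHm.mul hf'm).aestronglyMeasurable) one_le_two
        _ = 2 * ε n ^ (1/2 : ℝ) := by rw [t1, t2, two_mul]
    have htend : Tendsto (fun n => 2 * ε n ^ (1/2 : ℝ)) atTop (𝓝 0) := by
      have h1 : Tendsto (fun n => ε n ^ (1/2 : ℝ)) atTop (𝓝 ((0 : ℝ≥0∞) ^ (1/2 : ℝ))) :=
        (ENNReal.continuous_rpow_const.tendsto 0).comp hε0
      rw [ENNReal.zero_rpow_of_pos (by norm_num)] at h1
      have h2 := ENNReal.Tendsto.const_mul (a := (2 : ℝ≥0∞)) h1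
        (Or.inr (by norm_num))
      simpa using h2
    have hzero : eLpNorm (fun x => (⇑(U f) : ℝ → ℂ) x - H x * f' x) 2 μ₂ = 0 :=
      le_antisymm (ge_of_tendsto' htend hA) zero_le
    have hae := (eLpNorm_eq_zero_iff
      ((Lp.aestronglyMeasurable (U f)).sub (hHm.mul hf'm).aestronglyMeasurable)
      two_ne_zero).1 hzero
    filter_upwards [hae] with x hx
    exact sub_eq_zero.mp hx
  -- μ₂ ≪ μ₁
  have hac21 : μ₂ ≪ μ₁ := by
    refine Measure.AbsolutelyContinuous.mk fun s hs h1 => ?_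
    have hint : ∫⁻ x in s, D x ∂μ₂ = 0 := by rw [← stepB s hs, h1]
    have hD0 : ∀ᵐ x ∂μ₂.restrict s, D x = 0 := by
      rw [lintegral_eq_zero_iff hDm] at hint
      filter_upwards [hint] with x hx
      exact hx
    have hH0 : ∀ᵐ x ∂μ₂.restrict s, H x = 0 := by
      filter_upwards [hD0] with x hx
      have : (‖H x‖₊ : ℝ≥0∞) ^ 2 = 0 := hx
      simpa [pow_eq_zero_iff, nnnorm_eq_zero] using this
    set gF : ℝ → ℂ := s.indicator fun _ => (1 : ℂ) with hgF_def
    have hgFm : Measurable gF := measurable_const.indicator hs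
    have hgFb : ∀ x, ‖gF x‖ ≤ 1 := by
      intro x
      by_cases hx : x ∈ s <;> simp [hgF_def, hx]
    have memF : MemLp gF 2 μ₂ := MemLp.of_bound hgFm.aestronglyMeasurable 1 (ae_of_all _ hgFb)
    set F : Lp ℂ 2 μ₂ := memF.toLp gF with hF_def
    set f : Lp ℂ 2 μ₁ := U.symm F with hf_def
    have hUf : U f = F := U.apply_symm_apply F
    have hfm := (Lp.aestronglyMeasurable f)
    have key := stepD' f (hfm.mk _) hfm.stronglyMeasurable_mk.measurable hfm.ae_eq_mk
    rw [hUf] at key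
    have hfalse : ∀ᵐ (_ : ℝ) ∂μ₂.restrict s, False := by
      filter_upwards [ae_restrict_of_ae memF.coeFn_toLp, ae_restrict_of_ae key, hH0,
        ae_restrict_mem hs] with x e1 e2 e3 e4
      have hgFx : gF x = 1 := by
        rw [hgF_def]
        exact Set.indicator_of_mem e4 _
      have : (1 : ℂ) = 0 := by
        rw [← hgFx, ← e1, e2, e3, zero_mul]
      exact one_ne_zero this
    have hres : μ₂.restrict s = 0 := by
      rw [← Measure.measure_univ_eq_zero]
      simpa using hfalse
    rw [← Measure.restrict_apply_univ]
    simp [hres]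
  refine ⟨hac12, hac21, ?_, ?_⟩
  · intro f
    have hfm := (Lp.aestronglyMeasurable f)
    have key := stepD' f (hfm.mk _) hfm.stronglyMeasurable_mk.measurable hfm.ae_eq_mk
    have hf2 : (⇑f : ℝ → ℂ) =ᵐ[μ₂] hfm.mk _ := hfm.ae_eq_mk.filter_mono hac21.ae_le
    filter_upwards [key, hf2, hhH] with x e1 e2 e3
    rw [e1, ← e3, ← e2]
  · filter_upwards [hrn, hhH] with x e1 e2
    rw [e1]
    simp only [hD_def]
    rw [e2]
    simp
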